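/- Let J ∈ ℝ^{N×p} and y ∈ ℝ^N, and define h(θ, u, v) = (1/2)‖Jθ + u⊙u − v⊙v − y‖₂² for θ ∈ ℝ^p and u, v ∈ ℝ^N. Then every critical point (θ, u, v) of h (i.e., a point where the gradient of h vanishes) is either a global minimizer of h, or a strict saddle point, meaning the Hessian of h at (θ, u, v) has at least one negative eigenvalue (equivalently, there exists a direction d = (d_θ, d_u, d_v) along which the quadratic form of the Hessian is strictly negative). -/

import Mathlib

private lemma hasDerivAt_line {E F : Type*} [NormedAddCommGroup E] [NormedSpace ℝ E]
    [NormedAddCommGroup F] [NormedSpace ℝ F]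
    (f : E → F) (hf : Differentiable ℝ f) (x d : E) (t : ℝ) :
    HasDerivAt (fun s : ℝ => f (x + s • d)) (fderiv ℝ f (x + t • d) d) t := by
  have hline : HasDerivAt (fun s : ℝ => x + s • d) d t := by
    simpa using ((hasDerivAt_id t).smul_const d).const_add x
  exact (hf (x + t • d)).hasFDerivAt.comp_hasDerivAt t hline

private lemma inner_hasDerivAt (a b e t : ℝ) :
    HasDerivAt (fun t : ℝ => b + a * t + e * t ^ 2) (a + e * (2 * t)) t := by
  have H := ((((hasDerivAt_id t).const_mul a).const_add b).add
    ((hasDerivAt_pow 2 t).const_mul e))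
  refine H.congr_deriv ?_
  push_cast
  ring

private lemma phi_hasDerivAt (n : ℕ) (a b e : Fin n → ℝ) (t : ℝ) :
    HasDerivAt (fun t : ℝ => (1 / 2 : ℝ) * ∑ j, (b j + a j * t + e j * t ^ 2) ^ 2)
      ((1 / 2 : ℝ) * ∑ j, 2 * (b j + a j * t + e j * t ^ 2) * (a j + e j * (2 * t))) t := by
  apply HasDerivAt.const_mul
  apply HasDerivAt.fun_sum
  intro j _
  have H := (inner_hasDerivAt (a j) (b j) (e j) t).pow 2
  refine H.congr_deriv ?_
  push_cast
  ring

private lemma psi_hasDerivAt (n : ℕ) (a b e : Fin n → ℝ) (t : ℝ) :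
    HasDerivAt (fun t : ℝ => (1 / 2 : ℝ) * ∑ j, 2 * (b j + a j * t + e j * t ^ 2) * (a j + e j * (2 * t)))
      ((1 / 2 : ℝ) * ∑ j, (2 * (a j + e j * (2 * t)) * (a j + e j * (2 * t))
        + 2 * (b j + a j * t + e j * t ^ 2) * (e j * 2))) t := by
  apply HasDerivAt.const_mul
  apply HasDerivAt.fun_sum
  intro j _
  have H2 : HasDerivAt (fun y : ℝ => a j + e j * (2 * y)) (e j * (2 * 1)) t :=
    HasDerivAt.const_add (a j) (((hasDerivAt_id t).const_mul (2 : ℝ)).const_mul (e j))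
  have H := ((inner_hasDerivAt (a j) (b j) (e j) t).const_mul 2).mul H2
  refine H.congr_deriv ?_
  ring

/-- Every critical point of
`h(θ,u,v) = (1/2)‖Jθ + u⊙u − v⊙v − y‖₂²` is either a global minimizer or a
strict saddle (the Hessian has a direction of strictly negative curvature). -/
theorem stmt_0 (N p : ℕ) (J : Matrix (Fin N) (Fin p) ℝ) (y : Fin N → ℝ)
    (h : ((Fin p → ℝ) × (Fin N → ℝ) × (Fin N → ℝ)) → ℝ)
    (hdef : ∀ (θ : Fin p → ℝ) (u v : Fin N → ℝ), h (θ, u, v) =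
      (1 / 2) * ∑ i, (J.mulVec θ i + u i * u i - v i * v i - y i) ^ 2)
    (θ : Fin p → ℝ) (u v : Fin N → ℝ)
    (hcrit : fderiv ℝ h (θ, u, v) = 0) :
    (∀ x, h (θ, u, v) ≤ h x) ∨
    (∃ d : (Fin p → ℝ) × (Fin N → ℝ) × (Fin N → ℝ),
      (iteratedFDeriv ℝ 2 h (θ, u, v)) ![d, d] < 0) := by
  classical
  have hfun : h = fun z : (Fin p → ℝ) × (Fin N → ℝ) × (Fin N → ℝ) =>
      (1 / 2 : ℝ) * ∑ i, (J.mulVec z.1 i + z.2.1 i * z.2.1 i - z.2.2 i * z.2.2 i - y i) ^ 2 := by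
    funext z
    obtain ⟨a, b, c⟩ := z
    exact hdef a b c
  set r : Fin N → ℝ := fun i => J.mulVec θ i + u i * u i - v i * v i - y i with hr
  by_cases hres : ∀ i, r i = 0
  · left
    intro x
    obtain ⟨a, b, c⟩ := x
    have h0 : h (θ, u, v) = 0 := by
      rw [hdef]
      have : ∀ i ∈ Finset.univ, (J.mulVec θ i + u i * u i - v i * v i - y i) ^ 2 = 0 := by
        intro i _
        have := hres i
        rw [hr] at this
        simp only at this
        rw [this]
        ring
      rw [Finset.sum_congr rfl this]
      simp
    rw [h0, hdef]
    positivity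
  · right
    -- smoothness of h
    have hC2 : ContDiff ℝ 2 h := by
      rw [hfun]
      apply ContDiff.mul contDiff_const
      apply ContDiff.sum
      intro i _
      apply ContDiff.pow
      have h1 : ContDiff ℝ 2 fun z : (Fin p → ℝ) × (Fin N → ℝ) × (Fin N → ℝ) =>
          J.mulVec z.1 i := by
        simp only [Matrix.mulVec, dotProduct]
        exact ContDiff.sum fun j _ =>
          contDiff_const.mul ((contDiff_apply ℝ ℝ j).comp contDiff_fst)
      have hu1 : ContDiff ℝ 2 fun z : (Fin p → ℝ) × (Fin N → ℝ) × (Fin N → ℝ) => z.2.1 i :=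
        (contDiff_apply ℝ ℝ i).comp (contDiff_fst.comp contDiff_snd)
      have hv1 : ContDiff ℝ 2 fun z : (Fin p → ℝ) × (Fin N → ℝ) × (Fin N → ℝ) => z.2.2 i :=
        (contDiff_apply ℝ ℝ i).comp (contDiff_snd.comp contDiff_snd)
      exact ((h1.add (hu1.mul hu1)).sub (hv1.mul hv1)).sub contDiff_const
    have hDh : Differentiable ℝ h := hC2.differentiable (by norm_num)
    have hDf : Differentiable ℝ (fderiv ℝ h) :=
      (hC2.fderiv_right (m := 1) (by norm_num)).differentiable (by norm_num)
    -- Hessian quadratic form via line derivatives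
    have key : ∀ d : (Fin p → ℝ) × (Fin N → ℝ) × (Fin N → ℝ),
        iteratedFDeriv ℝ 2 h (θ, u, v) ![d, d]
          = deriv (fun t : ℝ => fderiv ℝ h ((θ, u, v) + t • d) d) 0 := by
      intro d
      rw [iteratedFDeriv_two_apply]
      have hdiff : Differentiable ℝ fun z => fderiv ℝ h z d :=
        hDf.clm_apply (differentiable_const d)
      have h2 := hasDerivAt_line _ hdiff (θ, u, v) d 0
      rw [h2.deriv, fderiv_clm_apply (hDf _) (differentiableAt_const d)]
      simp
    -- main computation for a direction whose line restriction is polynomial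
    have main : ∀ (d : (Fin p → ℝ) × (Fin N → ℝ) × (Fin N → ℝ)) (a e : Fin N → ℝ),
        (∀ t : ℝ, h ((θ, u, v) + t • d)
            = (1 / 2 : ℝ) * ∑ j, (r j + a j * t + e j * t ^ 2) ^ 2) →
        fderiv ℝ h (θ, u, v) d = ∑ j, r j * a j ∧
        iteratedFDeriv ℝ 2 h (θ, u, v) ![d, d] = ∑ j, (a j * a j + 2 * r j * e j) := by
      intro d a e hphi
      have hφd : ∀ t : ℝ, fderiv ℝ h ((θ, u, v) + t • d) d
          = (1 / 2 : ℝ) * ∑ j, 2 * (r j + a j * t + e j * t ^ 2) * (a j + e j * (2 * t)) := by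
        intro t
        have H1 := hasDerivAt_line h hDh (θ, u, v) d t
        have H2 := phi_hasDerivAt N a r e t
        rw [← (funext hphi :
          (fun t : ℝ => h ((θ, u, v) + t • d)) = _)] at H2
        exact H1.unique H2
      constructor
      · have H := hφd 0
        simp only [zero_smul, add_zero] at H
        rw [H]
        rw [Finset.mul_sum]
        apply Finset.sum_congr rfl
        intro j _
        ring
      · rw [key d, (funext hφd :
          (fun t : ℝ => fderiv ℝ h ((θ, u, v) + t • d) d) = _),
          (psi_hasDerivAt N a r e 0).deriv, Finset.mul_sum]
        apply Finset.sum_congr rfl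
        intro j _
        ring
    obtain ⟨i, hi⟩ := not_forall.mp hres
    have hz : ∀ d, fderiv ℝ h (θ, u, v) d = 0 := by
      intro d; rw [hcrit]; rfl
    rcases lt_or_gt_of_ne hi with hneg | hpos
    · -- r i < 0 : use the u direction
      set d : (Fin p → ℝ) × (Fin N → ℝ) × (Fin N → ℝ) :=
        (0, (Pi.single i 1 : Fin N → ℝ), 0) with hd
      have hphi : ∀ t : ℝ, h ((θ, u, v) + t • d)
          = (1 / 2 : ℝ) * ∑ j, (r j + (fun j => 2 * u j * (Pi.single i 1 : Fin N → ℝ) j) j * t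
              + (Pi.single i 1 : Fin N → ℝ) j * t ^ 2) ^ 2 := by
        intro t
        have hx : (θ, u, v) + t • d = (θ, u + t • (Pi.single i 1 : Fin N → ℝ), v) := by
          rw [hd]; ext <;> simp
        rw [hx, hdef]
        congr 1
        apply Finset.sum_congr rfl
        intro j _
        rw [hr]
        simp only [Pi.add_apply, Pi.smul_apply, smul_eq_mul, Pi.single_apply]
        by_cases hj : j = i <;> simp [hj] <;> ring
      obtain ⟨hfirst, hsecond⟩ := main d _ _ hphi
      have hzero := hz d
      rw [hfirst] at hzero
      have hsum1 : ∑ j, r j * (2 * u j * (Pi.single i 1 : Fin N → ℝ) j) = 2 * r i * u i := by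
        rw [Finset.sum_eq_single i]
        · simp; ring
        · intro b _ hb; simp [Pi.single_apply, hb]
        · simp
      rw [hsum1] at hzero
      have hui : u i = 0 := by
        rcases mul_eq_zero.mp hzero with h' | h'
        · rcases mul_eq_zero.mp h' with h'' | h''
          · norm_num at h''
          · exact absurd h'' hi
        · exact h'
      refine ⟨d, ?_⟩
      rw [hsecond]
      have hsum2 : ∑ j, ((2 * u j * (Pi.single i 1 : Fin N → ℝ) j) * (2 * u j * (Pi.single i 1 : Fin N → ℝ) j)
          + 2 * r j * (Pi.single i 1 : Fin N → ℝ) j) = 2 * r i := by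
        rw [Finset.sum_eq_single i]
        · simp [hui]
        · intro b _ hb; simp [Pi.single_apply, hb]
        · simp
      rw [hsum2]
      linarith
    · -- r i > 0 : use the v direction
      set d : (Fin p → ℝ) × (Fin N → ℝ) × (Fin N → ℝ) :=
        (0, 0, (Pi.single i 1 : Fin N → ℝ)) with hd
      have hphi : ∀ t : ℝ, h ((θ, u, v) + t • d)
          = (1 / 2 : ℝ) * ∑ j, (r j + (fun j => -(2 * v j * (Pi.single i 1 : Fin N → ℝ) j)) j * t
              + (fun j => -((Pi.single i 1 : Fin N → ℝ) j)) j * t ^ 2) ^ 2 := by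
        intro t
        have hx : (θ, u, v) + t • d = (θ, u, v + t • (Pi.single i 1 : Fin N → ℝ)) := by
          rw [hd]; ext <;> simp
        rw [hx, hdef]
        congr 1
        apply Finset.sum_congr rfl
        intro j _
        rw [hr]
        simp only [Pi.add_apply, Pi.smul_apply, smul_eq_mul, Pi.single_apply]
        by_cases hj : j = i <;> simp [hj] <;> ring
      obtain ⟨hfirst, hsecond⟩ := main d _ _ hphi
      have hzero := hz d
      rw [hfirst] at hzero
      have hsum1 : ∑ j, r j * (-(2 * v j * (Pi.single i 1 : Fin N → ℝ) j)) = -(2 * r i * v i) := by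
        rw [Finset.sum_eq_single i]
        · simp; ring
        · intro b _ hb; simp [Pi.single_apply, hb]
        · simp
      rw [hsum1] at hzero
      have hvi : v i = 0 := by
        have h' : 2 * r i * v i = 0 := by linarith
        rcases mul_eq_zero.mp h' with h'' | h''
        · rcases mul_eq_zero.mp h'' with h3 | h3
          · norm_num at h3
          · exact absurd h3 hi
        · exact h''
      refine ⟨d, ?_⟩
      rw [hsecond]
      have hsum2 : ∑ j, ((-(2 * v j * (Pi.single i 1 : Fin N → ℝ) j)) * (-(2 * v j * (Pi.single i 1 : Fin N → ℝ) j))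
          + 2 * r j * (-((Pi.single i 1 : Fin N → ℝ) j))) = -(2 * r i) := by
        rw [Finset.sum_eq_single i]
        · simp [hvi]
        · intro b _ hb; simp [Pi.single_apply, hb]
        · simp
      rw [hsum2]
      linarith
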